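/- For λ_1 ∈ ℂ, the set B = {π_n(λ_1, μ_1, …, μ_{n-1}) : μ_1, …, μ_{n-1} ∈ ℂ} equals {(λ_1 + z_1, λ_1 z_1 + z_2, …, λ_1 z_{n-2} + z_{n-1}, λ_1 z_{n-1}) : z_1, …, z_{n-1} ∈ ℂ}, and this set is a complex affine hyperplane in ℂⁿ. -/

import Mathlib

open Metric Finset

/-- The map whose `k`-th component is the `(k+1)`-st elementary symmetric polynomial. -/
noncomputable def symPoly (n : ℕ) (μ : Fin n → ℂ) : Fin n → ℂ :=
  fun k => ∑ s ∈ Finset.powersetCard ((k : ℕ) + 1) Finset.univ, ∏ i ∈ s, μ i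

/-- The symmetrized `n`-disc `𝔾ₙ = πₙ(𝔻ⁿ)`. -/
def symPolydisc (n : ℕ) : Set (Fin n → ℂ) :=
  {z | ∃ μ : Fin n → ℂ, (∀ i, ‖μ i‖ < 1) ∧ symPoly n μ = z}

lemma symPoly_eq_esymm (n : ℕ) (μ : Fin n → ℂ) (k : Fin n) :
    symPoly n μ k = (Finset.univ.val.map μ).esymm ((k : ℕ) + 1) := by
  rw [symPoly, Finset.esymm_map_val]

lemma esymm_zero'' (s : Multiset ℂ) : s.esymm 0 = 1 := by
  simp [Multiset.esymm, Multiset.powersetCard_zero_left]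

lemma esymm_eq_zero' {s : Multiset ℂ} {m : ℕ} (h : Multiset.card s < m) : s.esymm m = 0 := by
  rw [Multiset.esymm, Multiset.powersetCard_eq_empty _ h]
  rfl

lemma esymm_cons' (a : ℂ) (s : Multiset ℂ) (k : ℕ) :
    (a ::ₘ s).esymm (k + 1) = a * s.esymm k + s.esymm (k + 1) := by
  rw [Multiset.esymm, Multiset.powersetCard_cons, Multiset.map_add, Multiset.sum_add,
    Multiset.map_map, add_comm, Multiset.esymm, Multiset.esymm]
  congr 1
  rw [← Multiset.sum_map_mul_left]
  exact congrArg Multiset.sum (Multiset.map_congr rfl fun t _ => by simp)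

lemma map_univ_cons (a : ℂ) {n : ℕ} (μ : Fin n → ℂ) :
    (Finset.univ.val.map (Fin.cons a μ) : Multiset ℂ) = a ::ₘ Finset.univ.val.map μ := by
  rw [Fin.univ_val_map, Fin.univ_val_map, List.ofFn_succ, ← Multiset.cons_coe]
  simp

lemma cons_snoc_eq_esymm (n : ℕ) (μ : Fin n → ℂ) (j : Fin (n + 2)) :
    (Fin.cons 1 (Fin.snoc (symPoly n μ) 0) : Fin (n + 2) → ℂ) j
      = (Finset.univ.val.map μ).esymm (j : ℕ) := by
  have hcard : Multiset.card (Finset.univ.val.map μ) = n := by simp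
  induction j using Fin.cases with
  | zero => simp [esymm_zero'']
  | succ i =>
    rw [Fin.cons_succ]
    induction i using Fin.lastCases with
    | last =>
      rw [Fin.snoc_last]
      have h1 : (((Fin.last n).succ : Fin (n + 2)) : ℕ) = n + 1 := rfl
      rw [h1, esymm_eq_zero' (by omega)]
    | cast j' =>
      rw [Fin.snoc_castSucc, symPoly_eq_esymm]
      congr 1

lemma symPoly_cons (n : ℕ) (lam1 : ℂ) (μ : Fin n → ℂ) :
    symPoly (n + 1) (Fin.cons lam1 μ) = fun k : Fin (n + 1) =>
      lam1 * (Fin.cons 1 (Fin.snoc (symPoly n μ) 0) : Fin (n + 2) → ℂ) k.castSucc +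
        (Fin.cons 1 (Fin.snoc (symPoly n μ) 0) : Fin (n + 2) → ℂ) k.succ := by
  funext k
  rw [symPoly_eq_esymm, map_univ_cons, cons_snoc_eq_esymm, cons_snoc_eq_esymm]
  have h1 : ((k.castSucc : Fin (n + 2)) : ℕ) = (k : ℕ) := rfl
  have h2 : ((k.succ : Fin (n + 2)) : ℕ) = (k : ℕ) + 1 := rfl
  rw [h1, h2, esymm_cons']

open Polynomial in
lemma symPoly_surj (n : ℕ) (z : Fin n → ℂ) : ∃ μ : Fin n → ℂ, symPoly n μ = z := by
  classical
  rcases Nat.eq_zero_or_pos n with hn | hn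
  · subst hn; exact ⟨z, funext fun k => k.elim0⟩
  set a : ℕ → ℂ := fun j =>
    (-1) ^ (n - j) * (if h : n - j - 1 < n then z ⟨n - j - 1, h⟩ else 0) with ha
  set q : ℂ[X] := ∑ j ∈ Finset.range n, Polynomial.monomial j (a j) with hqdef
  have hq : q.degree < (n : WithBot ℕ) := by
    refine lt_of_le_of_lt (Polynomial.degree_sum_le _ _) ?_
    rw [Finset.sup_lt_iff (by exact_mod_cast WithBot.bot_lt_coe n)]
    intro j hj
    exact lt_of_le_of_lt (Polynomial.degree_monomial_le _ _)
      (by exact_mod_cast Finset.mem_range.mp hj)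
  set p : ℂ[X] := X ^ n + q with hpdef
  have hmonic : p.Monic := Polynomial.monic_X_pow_add hq
  have hdegp : p.degree = n := by
    rw [hpdef, Polynomial.degree_add_eq_left_of_degree_lt (by rwa [Polynomial.degree_X_pow]),
      Polynomial.degree_X_pow]
  have hdeg : p.natDegree = n := Polynomial.natDegree_eq_of_degree_eq_some hdegp
  have hcoeff : ∀ j < n, p.coeff j = a j := by
    intro j hj
    rw [hpdef, Polynomial.coeff_add, Polynomial.coeff_X_pow, if_neg (Nat.ne_of_lt hj), zero_add,
      hqdef, Polynomial.finset_sum_coeff]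
    simp only [Polynomial.coeff_monomial]
    rw [Finset.sum_ite_eq' (Finset.range n) j a, if_pos (Finset.mem_range.mpr hj)]
  have hsplits : p.Splits := IsAlgClosed.splits p
  have hcard : Multiset.card p.roots = n := by
    rw [Polynomial.splits_iff_card_roots.mp hsplits, hdeg]
  have hlen : p.roots.toList.length = n := by rw [Multiset.length_toList, hcard]
  set μ : Fin n → ℂ := fun i => p.roots.toList.get (Fin.cast hlen.symm i) with hμdef
  have hμ : (Finset.univ.val.map μ : Multiset ℂ) = p.roots := by
    rw [Fin.univ_val_map]
    have : List.ofFn μ = p.roots.toList := by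
      apply List.ext_getElem
      · simp [hlen]
      · intro i h1 h2
        simp [hμdef]
    rw [this, Multiset.coe_toList]
  refine ⟨μ, funext fun k => ?_⟩
  have hk1 : (k : ℕ) + 1 ≤ n := k.2
  rw [symPoly_eq_esymm, hμ]
  have h1 := Polynomial.coeff_eq_esymm_roots_of_splits hsplits
    (k := n - ((k : ℕ) + 1)) (by omega)
  rw [hdeg, hmonic.leadingCoeff, one_mul, Nat.sub_sub_self hk1] at h1
  have h2 : p.coeff (n - ((k : ℕ) + 1)) = a (n - ((k : ℕ) + 1)) :=
    hcoeff _ (by omega)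
  rw [h2, ha] at h1
  simp only [Nat.sub_sub_self hk1] at h1
  simp only [Nat.add_sub_cancel] at h1
  rw [dif_pos k.2] at h1
  have h4 : z ⟨(k : ℕ), k.2⟩ = z k := by congr
  rw [h4] at h1
  exact (mul_left_cancel₀ (pow_ne_zero _ (neg_ne_zero.mpr one_ne_zero)) h1).symm

lemma tele_sum (lam1 : ℂ) (n : ℕ) (c : ℕ → ℂ) :
    ∑ j ∈ Finset.range (n + 1), (lam1 * c j + c (j + 1)) * (-lam1) ^ (n - j)
      = c (n + 1) - c 0 * (-lam1) ^ (n + 1) := by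
  have h : ∀ j ∈ Finset.range (n + 1),
      (lam1 * c j + c (j + 1)) * (-lam1) ^ (n - j)
        = c (j + 1) * (-lam1) ^ (n + 1 - (j + 1)) - c j * (-lam1) ^ (n + 1 - j) := by
    intro j hj
    rw [Finset.mem_range] at hj
    have h1 : n + 1 - j = (n - j) + 1 := by omega
    have h2 : n + 1 - (j + 1) = n - j := by omega
    rw [h2, h1, pow_succ]
    ring
  rw [Finset.sum_congr rfl h, Finset.sum_range_sub (fun j => c j * (-lam1) ^ (n + 1 - j))]
  simp

/-- Auxiliary recursive sequence used to invert the affine map. -/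
noncomputable def teleSeq (lam1 : ℂ) (w : ℕ → ℂ) : ℕ → ℂ
  | 0 => 1
  | j + 1 => w j - lam1 * teleSeq lam1 w j

/-- For `λ₁ ∈ ℂ`, the set `B = {π(λ₁, μ) : μ ∈ ℂⁿ}` (in `ℂ^{n+1}`) equals
`{(λ₁ + z₁, λ₁z₁ + z₂, …, λ₁z_{n-1} + z_n, λ₁ z_n) : z ∈ ℂⁿ}`, and it is a complex
affine hyperplane. -/
theorem B_eq_and_hyperplane (n : ℕ) (lam1 : ℂ)
    (B : Set (Fin (n + 1) → ℂ))
    (hB : B = {w | ∃ μ : Fin n → ℂ, w = symPoly (n + 1) (Fin.cons lam1 μ)}) :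
    B = {w | ∃ z : Fin n → ℂ,
        w = fun k : Fin (n + 1) =>
          lam1 * (Fin.cons 1 (Fin.snoc z 0) : Fin (n + 2) → ℂ) k.castSucc +
            (Fin.cons 1 (Fin.snoc z 0) : Fin (n + 2) → ℂ) k.succ} ∧
      ∃ v : Fin (n + 1) → ℂ, v ≠ 0 ∧ ∃ c : ℂ, B = {w | ∑ i, w i * v i = c} := by
  classical
  subst hB
  set v : Fin (n + 1) → ℂ := fun k => (-lam1) ^ (n - (k : ℕ)) with hv
  set cc : ℂ := -(-lam1) ^ (n + 1) with hcc
  have key1 : {w | ∃ μ : Fin n → ℂ, w = symPoly (n + 1) (Fin.cons lam1 μ)}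
      = {w | ∃ z : Fin n → ℂ,
          w = fun k : Fin (n + 1) =>
            lam1 * (Fin.cons 1 (Fin.snoc z 0) : Fin (n + 2) → ℂ) k.castSucc +
              (Fin.cons 1 (Fin.snoc z 0) : Fin (n + 2) → ℂ) k.succ} := by
    ext w
    constructor
    · rintro ⟨μ, rfl⟩
      exact ⟨symPoly n μ, symPoly_cons n lam1 μ⟩
    · rintro ⟨z, rfl⟩
      obtain ⟨μ, hμ⟩ := symPoly_surj n z
      exact ⟨μ, by rw [symPoly_cons n lam1 μ, hμ]⟩
  have memS_iff : ∀ w : Fin (n + 1) → ℂ,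
      (∃ z : Fin n → ℂ,
        w = fun k : Fin (n + 1) =>
          lam1 * (Fin.cons 1 (Fin.snoc z 0) : Fin (n + 2) → ℂ) k.castSucc +
            (Fin.cons 1 (Fin.snoc z 0) : Fin (n + 2) → ℂ) k.succ)
      ↔ ∑ i, w i * v i = cc := by
    intro w
    constructor
    · rintro ⟨z, rfl⟩
      set c' : Fin (n + 2) → ℂ := (Fin.cons 1 (Fin.snoc z 0) : Fin (n + 2) → ℂ) with hc'
      set c'' : ℕ → ℂ := fun j => if h : j < n + 2 then c' ⟨j, h⟩ else 0 with hc''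
      have hterm : ∀ i : Fin (n + 1),
          (lam1 * c' i.castSucc + c' i.succ) * v i
            = (lam1 * c'' (i : ℕ) + c'' ((i : ℕ) + 1)) * (-lam1) ^ (n - (i : ℕ)) := by
        intro i
        have h1 : c'' (i : ℕ) = c' i.castSucc := by
          simp only [hc'']
          rw [dif_pos (show (i : ℕ) < n + 2 by omega)]
          congr 1
        have h2 : c'' ((i : ℕ) + 1) = c' i.succ := by
          simp only [hc'']
          rw [dif_pos (show (i : ℕ) + 1 < n + 2 by omega)]
          congr 1
        rw [h1, h2]
      calc ∑ i : Fin (n + 1), (lam1 * c' i.castSucc + c' i.succ) * v i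
          = ∑ j ∈ Finset.range (n + 1),
              (lam1 * c'' j + c'' (j + 1)) * (-lam1) ^ (n - j) := by
            rw [← Fin.sum_univ_eq_sum_range
              (fun j => (lam1 * c'' j + c'' (j + 1)) * (-lam1) ^ (n - j)) (n + 1)]
            exact Finset.sum_congr rfl fun i _ => hterm i
        _ = c'' (n + 1) - c'' 0 * (-lam1) ^ (n + 1) := tele_sum lam1 n c''
        _ = cc := by
            have h0 : c'' 0 = 1 := by
              simp only [hc'']
              rw [dif_pos (show 0 < n + 2 by omega)]
              exact Fin.cons_zero _ _
            have h1 : c'' (n + 1) = 0 := by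
              simp only [hc'']
              rw [dif_pos (show n + 1 < n + 2 by omega)]
              have : (⟨n + 1, by omega⟩ : Fin (n + 2)) = (Fin.last n).succ := rfl
              rw [this, hc', Fin.cons_succ, Fin.snoc_last]
            rw [h0, h1, hcc]
            ring
    · intro hw
      set w'' : ℕ → ℂ := fun j => if h : j < n + 1 then w ⟨j, h⟩ else 0 with hw''
      set g : ℕ → ℂ := teleSeq lam1 w'' with hg
      have hrec : ∀ j, lam1 * g j + g (j + 1) = w'' j := by
        intro j
        rw [hg]
        show lam1 * teleSeq lam1 w'' j + (w'' j - lam1 * teleSeq lam1 w'' j) = w'' j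
        ring
      have hsum : ∑ j ∈ Finset.range (n + 1), (lam1 * g j + g (j + 1)) * (-lam1) ^ (n - j)
          = ∑ i : Fin (n + 1), w i * v i := by
        rw [← Fin.sum_univ_eq_sum_range
          (fun j => (lam1 * g j + g (j + 1)) * (-lam1) ^ (n - j)) (n + 1)]
        refine Finset.sum_congr rfl fun i _ => ?_
        rw [hrec]
        simp only [hw'']
        rw [dif_pos i.2, Fin.eta]
      have hlast : g (n + 1) = 0 := by
        have := tele_sum lam1 n g
        rw [hsum, hw] at this
        have hg0 : g 0 = 1 := rfl
        rw [hg0, hcc] at this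
        linear_combination -this
      set z : Fin n → ℂ := fun j => g ((j : ℕ) + 1) with hz
      have hc : ∀ j : Fin (n + 2),
          (Fin.cons 1 (Fin.snoc z 0) : Fin (n + 2) → ℂ) j = g (j : ℕ) := by
        intro j
        induction j using Fin.cases with
        | zero => simp [hg, teleSeq]
        | succ i =>
          rw [Fin.cons_succ]
          induction i using Fin.lastCases with
          | last =>
            rw [Fin.snoc_last]
            have h1 : (((Fin.last n).succ : Fin (n + 2)) : ℕ) = n + 1 := rfl
            rw [h1, hlast]
          | cast j' =>
            rw [Fin.snoc_castSucc]
            rfl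
      refine ⟨z, funext fun k => ?_⟩
      rw [hc, hc]
      have h1 : ((k.castSucc : Fin (n + 2)) : ℕ) = (k : ℕ) := rfl
      have h2 : ((k.succ : Fin (n + 2)) : ℕ) = (k : ℕ) + 1 := rfl
      rw [h1, h2, hrec]
      simp only [hw'']
      rw [dif_pos k.2, Fin.eta]
  refine ⟨key1, v, ?_, cc, ?_⟩
  · intro h
    have h1 := congrFun h (Fin.last n)
    simp only [hv, Pi.zero_apply, Fin.val_last, Nat.sub_self, pow_zero] at h1
    exact one_ne_zero h1
  · rw [key1]
    ext w
    exact memS_iff w
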